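/- Let R be a ring and I ⊆ R a finitely generated ideal generated by a regular sequence (more specifically, assume I is generated by a single nonzerodivisor, or that I is a regular ideal). Then I/I² is a projective R/I-module and the natural map Sym^i_{R/I}(I/I²) → I^i/I^{i+1} is an isomorphism for all i ≥ 0. -/
import Mathlib

private theorem aux_sym_power (R : Type*) [CommRing R] (t : R)
    (ht : ∀ x : R, t * x = 0 → x = 0) (i : ℕ) :
      Function.Surjective
        (LinearMap.toSpanSingleton R
          (↥(Ideal.span {t} ^ i) ⧸ Submodule.comap
            (Submodule.subtype (Ideal.span {t} ^ i)) (Ideal.span {t} ^ (i + 1)))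
          (Submodule.Quotient.mk
            ⟨t ^ i, Ideal.pow_mem_pow (Ideal.mem_span_singleton_self t) i⟩)) ∧
      LinearMap.ker
        (LinearMap.toSpanSingleton R
          (↥(Ideal.span {t} ^ i) ⧸ Submodule.comap
            (Submodule.subtype (Ideal.span {t} ^ i)) (Ideal.span {t} ^ (i + 1)))
          (Submodule.Quotient.mk
            ⟨t ^ i, Ideal.pow_mem_pow (Ideal.mem_span_singleton_self t) i⟩))
        = Ideal.span {t} := by
  constructor
  · intro x
    obtain ⟨⟨y, hy⟩, rfl⟩ := Submodule.Quotient.mk_surjective _ x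
    rw [Ideal.span_singleton_pow, Ideal.mem_span_singleton] at hy
    obtain ⟨r, rfl⟩ := hy
    refine ⟨r, ?_⟩
    rw [LinearMap.toSpanSingleton_apply, ← Submodule.Quotient.mk_smul]
    congr 1
    ext
    simp [mul_comm]
  · ext r
    rw [LinearMap.mem_ker, LinearMap.toSpanSingleton_apply, ← Submodule.Quotient.mk_smul,
      Submodule.Quotient.mk_eq_zero, Submodule.mem_comap]
    simp only [Submodule.subtype_apply, SetLike.mk_smul_mk, smul_eq_mul]
    rw [Ideal.span_singleton_pow, Ideal.mem_span_singleton, Ideal.mem_span_singleton]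
    constructor
    · rintro ⟨s, hs⟩
      refine ⟨s, ?_⟩
      have : t ^ i * (r - t * s) = 0 := by
        ring_nf; rw [pow_succ] at hs; ring_nf at hs ⊢; linear_combination hs
      have h0 : ∀ n x, t ^ n * x = 0 → x = 0 := by
        intro n
        induction n with
        | zero => intro x hx; simpa using hx
        | succ n ih => intro x hx; rw [pow_succ, mul_assoc] at hx; exact ht _ (ih _ hx)
      exact sub_eq_zero.mp (h0 i _ this)
    · rintro ⟨s, rfl⟩
      exact ⟨s, by ring⟩

private theorem aux_proj (R : Type*) [CommRing R] (t : R)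
    (ht : ∀ x : R, t * x = 0 → x = 0) :
    Module.Projective (R ⧸ Ideal.span {t}) (Ideal.span {t}).Cotangent := by
  set I := Ideal.span {t} with hI
  let f : R →ₗ[R] I.Cotangent :=
    I.toCotangent ∘ₗ LinearMap.toSpanSingleton R I ⟨t, Ideal.mem_span_singleton_self t⟩
  have hf : Function.Surjective f := by
    intro x
    obtain ⟨⟨y, hy⟩, rfl⟩ := Ideal.toCotangent_surjective I x
    rw [hI, Ideal.mem_span_singleton] at hy
    obtain ⟨r, rfl⟩ := hy
    refine ⟨r, ?_⟩
    simp only [f, LinearMap.comp_apply, LinearMap.toSpanSingleton_apply]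
    congr 1
    ext
    simp [mul_comm]
  have hker : LinearMap.ker f = I := by
    ext r
    simp only [LinearMap.mem_ker, f, LinearMap.comp_apply, LinearMap.toSpanSingleton_apply,
      Ideal.toCotangent_eq_zero]
    simp only [SetLike.mk_smul_mk, smul_eq_mul]
    rw [hI, pow_two, Ideal.span_singleton_mul_span_singleton, Ideal.mem_span_singleton,
      Ideal.mem_span_singleton]
    constructor
    · rintro ⟨s, hs⟩
      refine ⟨s, ?_⟩
      have : t * (r - t * s) = 0 := by ring_nf; ring_nf at hs; linear_combination hs
      exact sub_eq_zero.mp (ht _ this)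
    · rintro ⟨s, rfl⟩
      exact ⟨s, by ring⟩
  let e : (R ⧸ I) ≃ₗ[R] I.Cotangent := (Submodule.quotEquivOfEq _ _ hker.symm).trans
    (f.quotKerEquivOfSurjective hf)
  have hsurj : Function.Surjective (algebraMap R (R ⧸ I)) := Ideal.Quotient.mk_surjective
  let e' : (R ⧸ I) ≃ₗ[R ⧸ I] I.Cotangent := e.extendScalarsOfSurjective hsurj
  exact Module.Projective.of_equiv e'

/-- Let `R` be a ring and `I = (t)` with `t` a nonzerodivisor.
Then `I/I²` is a projective `R/I`-module, and the natural map
`Sym^i_{R/I}(I/I²) → I^i/I^{i+1}` is an isomorphism for all `i ≥ 0`.  Since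
`Sym^i(I/I²)` is free of rank 1 over `R/I` on the `i`-th symmetric power of the
class of `t`, the natural map being an isomorphism is expressed concretely:
for every `i`, the map `R → I^i/I^{i+1}`, `r ↦ r·[tⁱ]` (the image under the
natural map of `r` times the `i`-th symmetric power of the class of `t`), is
surjective with kernel exactly `I`, i.e. it induces an isomorphism
`R/I ≅ I^i/I^{i+1}`. -/
theorem cotangent_projective_and_sym_powers_of_principal
    (R : Type*) [CommRing R] (t : R)
    (ht : ∀ x : R, t * x = 0 → x = 0) :
    Module.Projective (R ⧸ Ideal.span {t}) (Ideal.span {t}).Cotangent ∧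
    ∀ i : ℕ,
      Function.Surjective
        (LinearMap.toSpanSingleton R
          (↥(Ideal.span {t} ^ i) ⧸ Submodule.comap
            (Submodule.subtype (Ideal.span {t} ^ i)) (Ideal.span {t} ^ (i + 1)))
          (Submodule.Quotient.mk
            ⟨t ^ i, Ideal.pow_mem_pow (Ideal.mem_span_singleton_self t) i⟩)) ∧
      LinearMap.ker
        (LinearMap.toSpanSingleton R
          (↥(Ideal.span {t} ^ i) ⧸ Submodule.comap
            (Submodule.subtype (Ideal.span {t} ^ i)) (Ideal.span {t} ^ (i + 1)))
          (Submodule.Quotient.mk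
            ⟨t ^ i, Ideal.pow_mem_pow (Ideal.mem_span_singleton_self t) i⟩))
        = Ideal.span {t} := by
  exact ⟨aux_proj R t ht, aux_sym_power R t ht⟩
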